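/- Let a_1, ..., a_k be positive integers with gcd(a_1, ..., a_k) = d. Then the state complexity of the unary language {0^{a_1}, ..., 0^{a_k}}* equals d·(g(a_1/d, ..., a_k/d) + 1) + 1. -/

import Mathlib

open Computability

/-- The state complexity of a language: the least number of states of a complete DFA
accepting it. -/
noncomputable def stateComplexity {α : Type} (L : Language α) : ℕ :=
  sInf {n : ℕ | ∃ M : DFA α (Fin n), M.accepts = L}

/-- The state reached after reading `n` symbols in the canonical unary DFA. -/
private def phiAux (d g : ℕ) : ℕ → ℕ
  | 0 => 0
  | n+1 => if phiAux d g n + 1 ≤ d*g+d then phiAux d g n + 1 else d*g+1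

private lemma phiAux_succ (d g n : ℕ) :
    phiAux d g (n+1) = if phiAux d g n + 1 ≤ d*g+d then phiAux d g n + 1 else d*g+1 := rfl

private lemma phiAux_le (d g : ℕ) (hd : 0 < d) : ∀ n, phiAux d g n ≤ d*g+d
  | 0 => by simp [phiAux]
  | n+1 => by
      have := phiAux_le d g hd n
      rw [phiAux_succ]
      split <;> omega

private lemma phiAux_spec (d g : ℕ) (hd : 0 < d) (n : ℕ) :
    ∃ t, n = phiAux d g n + d*t ∧ (t = 0 ∨ d*g+1 ≤ phiAux d g n) := by
  induction n with
  | zero => exact ⟨0, by simp [phiAux], Or.inl rfl⟩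
  | succ n ih =>
    obtain ⟨t, h1, h2⟩ := ih
    have hle := phiAux_le d g hd n
    rw [phiAux_succ]
    split
    · exact ⟨t, by omega, by omega⟩
    · refine ⟨t+1, ?_, Or.inr le_rfl⟩
      have : d*(t+1) = d*t + d := by ring
      omega

/-- The canonical unary DFA with `d*g+d+1` states. -/
private def unaryDFA (d g : ℕ) (hd : 0 < d) (A : Set ℕ) : DFA Unit (Fin (d*g+d+1)) where
  step s _ := if h : (s : ℕ) + 1 ≤ d*g+d then ⟨(s:ℕ)+1, by omega⟩ else ⟨d*g+1, by omega⟩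
  start := ⟨0, by omega⟩
  accept := {s | (s : ℕ) ∈ A}

private lemma unaryDFA_eval (d g : ℕ) (hd : 0 < d) (A : Set ℕ) (n : ℕ) :
    ((unaryDFA d g hd A).eval (List.replicate n ()) : ℕ) = phiAux d g n := by
  induction n with
  | zero => rfl
  | succ n ih =>
    rw [List.replicate_add, List.replicate_one, DFA.eval_append_singleton, phiAux_succ]
    show ((if h : ((unaryDFA d g hd A).eval (List.replicate n ()) : ℕ) + 1 ≤ d*g+d then
      (⟨((unaryDFA d g hd A).eval (List.replicate n ()) : ℕ) + 1, by omega⟩ : Fin (d*g+d+1))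
      else ⟨d*g+1, by omega⟩) : Fin (d*g+d+1)).val = _
    by_cases hcond : phiAux d g n + 1 ≤ d*g+d
    · rw [dif_pos (by omega)]
      rw [if_pos hcond]
      simpa using ih
    · rw [dif_neg (by omega), if_neg hcond]

private lemma arith_dvd (d g p q s : ℕ) (hpq : p < q) (hq : q ≤ d*g+d)
    (hs : q - p = d*s) :
    p + (d*g - p) = d*g ∧ q + (d*g - p) = d*(g+s) ∧ g < g + s := by
  have h0 : d*(g+s) = d*g + d*s := by ring
  have hs1 : 1 ≤ s := by
    rcases Nat.eq_zero_or_pos s with rfl | h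
    · simp at hs; omega
    · exact h
  have hds : d*1 ≤ d * s := Nat.mul_le_mul_left d hs1
  have h1 : d*1 = d := by ring
  omega

private lemma arith_ndvd (d g p q : ℕ) (hd : 0 < d) (hpq : p < q) :
    p + (d*(g+1+p) - p) = d*(g+1+p) ∧ q + (d*(g+1+p) - p) = d*(g+1+p) + (q-p) ∧
      d*g+1 ≤ d*(g+1+p) := by
  have h1 : d*(g+1+p) = d*g + d*(1+p) := by ring
  have h2 : d*1 ≤ d*(1+p) := Nat.mul_le_mul_left d (by omega)
  have h3 : d*1 = d := by ring
  have h4 : 1*(1+p) ≤ d*(1+p) := Nat.mul_le_mul_right _ hd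
  have h5 : 1*(1+p) = 1+p := by ring
  omega

/-- For positive integers `a 1, …, a k` with gcd `d`, the state complexity of
the unary language `{0^{a 1}, …, 0^{a k}}∗` equals `d·(g(a 1/d, …, a k/d) + 1) + 1`. -/
theorem stateComplexity_unary_kstar_gcd (k : ℕ) (a : Fin k → ℕ) (ha : ∀ i, 0 < a i)
    (d : ℕ) (hd : Finset.univ.gcd a = d)
    (g : ℕ)
    (hg : IsGreatest {n : ℕ | n ∉ AddSubmonoid.closure (Set.range (fun i => a i / d))} g)
    (S : Language Unit) (hS : S = Set.range (fun i => List.replicate (a i) ())) :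
    stateComplexity (S∗) = d * (g + 1) + 1 := by
  classical
  set M := AddSubmonoid.closure (Set.range (fun i => a i / d)) with hM
  -- d is positive
  have hd0 : 0 < d := by
    rcases Nat.eq_zero_or_pos d with h0 | h
    · exfalso
      have hall : ∀ i ∈ Finset.univ, a i = 0 := Finset.gcd_eq_zero_iff.mp (by rw [hd, h0])
      have hk : IsEmpty (Fin k) := ⟨fun i => absurd (hall i (Finset.mem_univ i)) (ha i).ne'⟩
      have hr : Set.range (fun i : Fin k => a i / d) = ∅ := Set.range_eq_empty _
      have hMbot : M = ⊥ := by rw [hM, hr, AddSubmonoid.closure_empty]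
      have hmem : g + 1 ∈ {n : ℕ | n ∉ M} := by
        simp only [Set.mem_setOf_eq, hMbot, AddSubmonoid.mem_bot]
        omega
      exact absurd (hg.2 hmem) (by omega)
    · exact h
  have hgM : g ∉ M := hg.1
  have hgt : ∀ m, g < m → m ∈ M := by
    intro m hm
    by_contra h
    exact absurd (hg.2 h) (by omega)
  have hdvd : ∀ i, d ∣ a i := fun i => hd ▸ Finset.gcd_dvd (Finset.mem_univ i)
  have hab : ∀ i, a i = d * (a i / d) := fun i => (Nat.mul_div_cancel' (hdvd i)).symm
  -- the length predicate
  set Lp : ℕ → Prop := fun n => ∃ m, m ∈ M ∧ n = d * m with hLpdef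
  -- closure of range a characterizes Lp
  have hclos : ∀ n, n ∈ AddSubmonoid.closure (Set.range a) ↔ Lp n := by
    intro n
    constructor
    · intro hn
      induction hn using AddSubmonoid.closure_induction with
      | mem x hx =>
        obtain ⟨i, rfl⟩ := hx
        exact ⟨a i / d, AddSubmonoid.subset_closure ⟨i, rfl⟩, hab i⟩
      | zero => exact ⟨0, zero_mem _, by simp⟩
      | add x y _ _ hx hy =>
        obtain ⟨m1, hm1, rfl⟩ := hx
        obtain ⟨m2, hm2, rfl⟩ := hy
        exact ⟨m1 + m2, add_mem hm1 hm2, by ring⟩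
    · rintro ⟨m, hm, rfl⟩
      induction hm using AddSubmonoid.closure_induction with
      | mem x hx =>
        obtain ⟨i, rfl⟩ := hx
        exact AddSubmonoid.subset_closure ⟨i, hab i⟩
      | zero =>
        have : d * 0 = 0 := by ring
        rw [this]
        exact zero_mem _
      | add x y _ _ hx hy =>
        have : d * (x + y) = d * x + d * y := by ring
        rw [this]
        exact add_mem hx hy
  -- words of Unit of equal length are equal
  have hulen : ∀ u v : List Unit, u.length = v.length → u = v := by
    intro u v h
    apply List.ext_getElem h
    intro i h1 h2
    rfl
  -- membership in S∗ in terms of length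
  have hmemS : ∀ w : List Unit, w ∈ (S∗ : Language Unit) ↔ Lp w.length := by
    intro w
    rw [← hclos]
    constructor
    · intro hw
      obtain ⟨L, rfl, hL⟩ := Language.mem_kstar.mp hw
      rw [List.length_flatten]
      apply AddSubmonoid.list_sum_mem
      intro x hx
      simp only [List.mem_map] at hx
      obtain ⟨y, hy, rfl⟩ := hx
      have := hL y hy
      rw [hS] at this
      obtain ⟨i, rfl⟩ := this
      exact AddSubmonoid.subset_closure ⟨i, by simp⟩
    · intro hw
      obtain ⟨l, hl, hsum⟩ := AddSubmonoid.exists_list_of_mem_closure hw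
      have hweq : w = (l.map (fun n => List.replicate n ())).flatten := by
        apply hulen
        rw [List.length_flatten]
        simp only [List.map_map]
        rw [show ((fun x : List Unit => x.length) ∘ fun n => List.replicate n ()) = id by
          funext n; simp]
        simpa using hsum.symm
      rw [hweq]
      apply Language.join_mem_kstar
      intro y hy
      simp only [List.mem_map] at hy
      obtain ⟨n, hn, rfl⟩ := hy
      obtain ⟨i, rfl⟩ := hl n hn
      rw [hS]
      exact ⟨i, rfl⟩
  -- basic facts about Lp
  have hLpg : ¬ Lp (d*g) := by
    rintro ⟨m, hm, he⟩
    have : g = m := Nat.eq_of_mul_eq_mul_left hd0 he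
    exact hgM (this ▸ hm)
  have hLpbig : ∀ n, d*g+1 ≤ n → (Lp n ↔ d ∣ n) := by
    intro n hn
    constructor
    · rintro ⟨m, _, rfl⟩
      exact Dvd.intro m rfl
    · rintro ⟨m, rfl⟩
      refine ⟨m, hgt m ?_, rfl⟩
      by_contra hc
      push_neg at hc
      have : d * m ≤ d * g := Nat.mul_le_mul_left d hc
      omega
  -- Lp is invariant under phiAux
  have hLpPhi : ∀ n, Lp (phiAux d g n) ↔ Lp n := by
    intro n
    obtain ⟨t, h1, h2⟩ := phiAux_spec d g hd0 n
    rcases h2 with rfl | h2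
    · simp only [Nat.mul_zero, Nat.add_zero] at h1
      rw [← h1]
    · have hn : d*g+1 ≤ n := by omega
      rw [hLpbig _ h2, hLpbig _ hn]
      constructor
      · intro hx
        rw [h1]
        exact Nat.dvd_add hx (dvd_mul_right d t)
      · intro hx
        have h3 : d ∣ n - d*t := Nat.dvd_sub hx (dvd_mul_right d t)
        have h4 : n - d*t = phiAux d g n := by omega
        rwa [h4] at h3
  -- Lp in terms of words
  have hLpw : ∀ n, Lp n ↔ List.replicate n () ∈ (S∗ : Language Unit) := by
    intro n
    rw [hmemS, List.length_replicate]
  -- the upper bound DFA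
  have hNeq : d * (g + 1) + 1 = d*g+d+1 := by ring
  have hupper : ∃ M0 : DFA Unit (Fin (d * (g+1) + 1)), M0.accepts = S∗ := by
    rw [hNeq]
    refine ⟨unaryDFA d g hd0 {n | Lp n}, ?_⟩
    ext w
    obtain ⟨n, rfl⟩ : ∃ n, w = List.replicate n () := ⟨w.length, (hulen _ _ (by simp)).symm⟩
    rw [DFA.mem_accepts]
    have hev := unaryDFA_eval d g hd0 {n | Lp n} n
    constructor
    · intro hacc
      have h1 : Lp (phiAux d g n) := by rw [← hev]; exact hacc
      rw [hmemS, List.length_replicate]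
      exact (hLpPhi n).mp h1
    · intro hmem
      show ((unaryDFA d g hd0 {n | Lp n}).eval (List.replicate n ()) : ℕ) ∈ {n | Lp n}
      rw [hev]
      exact (hLpPhi n).mpr (by rwa [hmemS, List.length_replicate] at hmem)
  -- lower bound: no smaller DFA works
  have hlower : ∀ m, (∃ M' : DFA Unit (Fin m), M'.accepts = S∗) → d * (g+1) + 1 ≤ m := by
    intro m ⟨M', hM'⟩
    by_contra hc
    push_neg at hc
    -- pigeonhole on the states reached by replicate i
    have hcard : Fintype.card (Fin m) < Fintype.card (Fin (d*(g+1)+1)) := by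
      simpa using hc
    obtain ⟨i, j, hij, he⟩ := Fintype.exists_ne_map_eq_of_card_lt
      (fun i : Fin (d*(g+1)+1) => M'.eval (List.replicate (i : ℕ) ())) hcard
    -- key claim: two distinct small indices with equal state lead to contradiction
    have claim : ∀ p q : ℕ, p < q → q ≤ d*g+d →
        M'.eval (List.replicate p ()) = M'.eval (List.replicate q ()) → False := by
      intro p q hpq hqle heq
      have key : ∀ t, (Lp (p+t) ↔ Lp (q+t)) := by
        intro t
        have e1 : ∀ r : ℕ, M'.eval (List.replicate (r+t) ()) =
            M'.evalFrom (M'.eval (List.replicate r ())) (List.replicate t ()) := by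
          intro r
          rw [List.replicate_add]
          exact M'.evalFrom_of_append M'.start _ _
        have h1 : Lp (p+t) ↔ M'.eval (List.replicate (p+t) ()) ∈ M'.accept := by
          rw [hLpw, ← hM', DFA.mem_accepts]
        have h2 : Lp (q+t) ↔ M'.eval (List.replicate (q+t) ()) ∈ M'.accept := by
          rw [hLpw, ← hM', DFA.mem_accepts]
        rw [h1, h2, e1 p, e1 q, heq]
      by_cases hdc : d ∣ (q - p)
      · -- same residue: distinguish with d*g
        obtain ⟨s, hs⟩ := hdc
        obtain ⟨e2, e3, hgs⟩ := arith_dvd d g p q s hpq hqle hs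
        have hkey := key (d*g - p)
        rw [e2, e3] at hkey
        have : Lp (d*(g+s)) := ⟨g+s, hgt _ hgs, rfl⟩
        exact hLpg (hkey.mpr this)
      · -- different residue: distinguish with a large multiple of d
        obtain ⟨e2, e3, hbig⟩ := arith_ndvd d g p q hd0 hpq
        have hkey := key (d*(g+1+p) - p)
        rw [e2, e3] at hkey
        have hLp1 : Lp (d*(g+1+p)) := ⟨g+1+p, hgt _ (show g < g+1+p by omega), rfl⟩
        have hLp2 : Lp (d*(g+1+p) + (q-p)) := hkey.mp hLp1
        have hdvd2 := (hLpbig _ (Nat.le_add_right_of_le hbig)).mp hLp2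
        have hd2 : d ∣ d*(g+1+p) := Dvd.intro _ rfl
        exact hdc ((Nat.dvd_add_right hd2).mp hdvd2)
    -- apply claim
    have hibound : (i : ℕ) ≤ d*g+d := by
      have := i.isLt
      omega
    have hjbound : (j : ℕ) ≤ d*g+d := by
      have := j.isLt
      omega
    rcases lt_trichotomy (i : ℕ) (j : ℕ) with h | h | h
    · exact claim i j h hjbound he
    · exact hij (Fin.ext h)
    · exact claim j i h hibound he.symm
  -- conclude
  unfold stateComplexity
  apply le_antisymm
  · exact Nat.sInf_le hupper
  · exact le_csInf ⟨_, hupper⟩ hlower
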